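/- Let u be a string of length n with period set P and irreducible period set R(P) = {0 = a_0 < a_1 < ... < a_k}. Then for every 0 ≤ i ≤ k there exists q_i ∈ {1,...,n - a_i} such that (1) q_i ≤ n / 2^i, and (2) either a_i + q_i = n or a_i + q_i lies in the forward closure FC_n({a_0,...,a_i}). -/

import Mathlib

set_option maxHeartbeats 1000000


def IsPeriod {α : Type*} (n : ℕ) (u : Fin n → α) (p : ℕ) : Prop :=
  p < n ∧ ∀ (i : ℕ) (h : i + p < n),
    u ⟨i, Nat.lt_of_le_of_lt (Nat.le_add_right i p) h⟩ = u ⟨i + p, h⟩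

/-- Generators of the forward closure: smallest superset of `S` closed under the
forward propagation rule. -/
inductive FCgen (n : ℕ) (S : Set ℕ) : ℕ → Prop
  | base {p : ℕ} : p ∈ S → FCgen n S p
  | step {p q k : ℕ} : FCgen n S p → FCgen n S q → p ≤ q →
      p + k * (q - p) < n → FCgen n S (p + k * (q - p))

/-- The forward closure of a set `S ⊆ {0,…,n-1}`. -/
def FC (n : ℕ) (S : Set ℕ) : Set ℕ := {m | FCgen n S m}

/-- The period set of a string. -/
def PeriodSet {α : Type*} (n : ℕ) (u : Fin n → α) : Set ℕ := {p | IsPeriod n u p}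

/-- `R` is the irreducible period set of `P`: a minimal subset of `P` whose
forward closure is `P`. -/
def IsIrred (n : ℕ) (P R : Set ℕ) : Prop :=
  R ⊆ P ∧ FC n R = P ∧ ∀ R' ⊆ R, FC n R' = P → R' = R

lemma FC_mono {n : ℕ} {S T : Set ℕ} (h : S ⊆ T) : FC n S ⊆ FC n T := by
  intro x hx
  induction hx with
  | base hp => exact FCgen.base (h hp)
  | step h1 h2 hle hlt ih1 ih2 => exact FCgen.step ih1 ih2 hle hlt

lemma FC_closure {n : ℕ} {S T : Set ℕ} (h : S ⊆ FC n T) : FC n S ⊆ FC n T := by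
  intro x hx
  induction hx with
  | base hp => exact h hp
  | step h1 h2 hle hlt ih1 ih2 => exact FCgen.step ih1 ih2 hle hlt

/-- The inductive step, with abstract data. -/
lemma step_lemma {n : ℕ} {S T : Set ℕ} {ai p qi : ℕ} (hST : S ⊆ T)
    (hai : ai ∈ S) (hpT : p ∈ T) (hpn : p < n) (haip : ai < p)
    (hq1 : 1 ≤ qi) (hq4 : ai + qi = n ∨ ai + qi ∈ FC n S)
    (hp_not : p ∉ FC n S) :
    ∃ q, 1 ≤ q ∧ q ≤ n - p ∧ 2 * q ≤ qi ∧ (p + q = n ∨ p + q ∈ FC n T) := by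
  -- lattice point m below p
  have hdm := Nat.div_add_mod (p - ai) qi
  have hmod : (p - ai) % qi < qi := Nat.mod_lt _ hq1
  have hcomm : qi * ((p - ai) / qi) = (p - ai) / qi * qi := mul_comm _ _
  have hmul := Nat.div_mul_le_self (p - ai) qi
  have hm_le : ai + (p - ai) / qi * qi ≤ p := by omega
  have hm_lt : p < ai + (p - ai) / qi * qi + qi := by omega
  have hba : ai + qi - ai = qi := by omega
  have hm_mem : ai + (p - ai) / qi * qi ∈ FC n S := by
    rcases hq4 with hb | hb
    · have hK0 : (p - ai) / qi = 0 := Nat.div_eq_of_lt (by omega)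
      rw [hK0]
      simp only [zero_mul, add_zero]
      exact FCgen.base hai
    · have hstep := FCgen.step (FCgen.base hai) hb (by omega : ai ≤ ai + qi)
        (show ai + (p - ai) / qi * (ai + qi - ai) < n by rw [hba]; omega)
      rwa [hba] at hstep
  generalize hm : ai + (p - ai) / qi * qi = m at *
  -- point c above p
  obtain ⟨c, hcp, hcq, hcm⟩ : ∃ c, p < c ∧ c - m ≤ qi ∧ (c = n ∨ c ∈ FC n S) := by
    by_cases hc : m + qi < n
    · refine ⟨m + qi, by omega, by omega, Or.inr ?_⟩
      rcases hq4 with hb | hb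
      · omega
      · have hs : ((p - ai) / qi + 1) * qi = (p - ai) / qi * qi + qi := Nat.succ_mul _ _
        have hstep := FCgen.step (FCgen.base hai) hb (by omega : ai ≤ ai + qi)
          (show ai + ((p - ai) / qi + 1) * (ai + qi - ai) < n by rw [hba]; omega)
        rw [hba] at hstep
        have h6 : m + qi = ai + ((p - ai) / qi + 1) * qi := by omega
        rwa [h6]
    · exact ⟨n, by omega, by omega, Or.inl rfl⟩
  have hmp : m < p := by
    rcases Nat.lt_or_ge m p with h' | h'
    · exact h'
    · exact absurd ((by omega : m = p) ▸ hm_mem) hp_not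
  refine ⟨min (n - p) (min (p - m) (c - p)), by omega, by omega, by omega, ?_⟩
  by_cases hqn : min (n - p) (min (p - m) (c - p)) = n - p
  · left; omega
  · right
    have hq'n : min (n - p) (min (p - m) (c - p)) < n - p := by omega
    by_cases hpm : p - m ≤ c - p
    · have hmem2 := FCgen.step (FC_mono hST hm_mem) (FCgen.base hpT)
        (le_of_lt hmp) (show m + 2 * (p - m) < n by omega)
      have heq2 : p + min (n - p) (min (p - m) (c - p)) = m + 2 * (p - m) := by omega
      rwa [heq2]
    · have hcn : c < n := by omega
      rcases hcm with hcm | hcm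
      · omega
      · have heq2 : p + min (n - p) (min (p - m) (c - p)) = c := by omega
        rw [heq2]
        exact FC_mono hST hcm

/-- `a ⟨i+1⟩` is not generated by the earlier ones. -/
lemma irred_not_mem {α : Type*} {n k : ℕ} (u : Fin n → α) (a : Fin (k + 1) → ℕ)
    (ha : StrictMono a) (hirr : IsIrred n (PeriodSet n u) (Set.range a))
    {i : ℕ} (h : i + 1 < k + 1) :
    a ⟨i + 1, h⟩ ∉ FC n (Set.range fun j : Fin (i + 1) => a ⟨j, by omega⟩) := by
  intro hp
  have hsub : (Set.range fun j : Fin (i + 1) => a ⟨j, by omega⟩) ⊆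
      Set.range a \ {a ⟨i + 1, h⟩} := by
    rintro x ⟨j, rfl⟩
    refine ⟨⟨⟨j, by omega⟩, rfl⟩, ?_⟩
    simp only [Set.mem_singleton_iff]
    intro hxe
    have hje := congrArg Fin.val (ha.injective hxe)
    simp at hje
    omega
  have hpR' : a ⟨i + 1, h⟩ ∈ FC n (Set.range a \ {a ⟨i + 1, h⟩}) := FC_mono hsub hp
  have hRsub : Set.range a ⊆ FC n (Set.range a \ {a ⟨i + 1, h⟩}) := by
    rintro x ⟨j, rfl⟩
    by_cases hj : a j = a ⟨i + 1, h⟩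
    · rwa [hj]
    · exact FCgen.base ⟨⟨j, rfl⟩, hj⟩
  have hFCeq : FC n (Set.range a \ {a ⟨i + 1, h⟩}) = PeriodSet n u := by
    apply Set.Subset.antisymm
    · rw [← hirr.2.1]
      exact FC_mono Set.diff_subset
    · rw [← hirr.2.1]
      exact FC_closure hRsub
  have heq := hirr.2.2 _ Set.diff_subset hFCeq
  have hpmem : a ⟨i + 1, h⟩ ∈ Set.range a := ⟨⟨i + 1, h⟩, rfl⟩
  rw [← heq] at hpmem
  exact hpmem.2 rfl

lemma exists_qi_aux {α : Type*} {n k : ℕ} (u : Fin n → α) (a : Fin (k + 1) → ℕ)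
    (ha : StrictMono a) (ha0 : a 0 = 0)
    (hirr : IsIrred n (PeriodSet n u) (Set.range a)) :
    ∀ (i : ℕ) (h : i < k + 1), ∃ q : ℕ, 1 ≤ q ∧ q ≤ n - a ⟨i, h⟩ ∧
      2 ^ i * q ≤ n ∧
      (a ⟨i, h⟩ + q = n ∨
        a ⟨i, h⟩ + q ∈ FC n (Set.range fun j : Fin (i + 1) => a ⟨j, by omega⟩)) := by
  have han : ∀ j : Fin (k + 1), a j < n := fun j => (hirr.1 ⟨j, rfl⟩).1
  intro i
  induction i with
  | zero =>
    intro h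
    have h0 : (⟨0, h⟩ : Fin (k + 1)) = 0 := by ext; simp
    have hn : 0 < n := by have := han 0; omega
    refine ⟨n, hn, ?_, by simp, Or.inl ?_⟩ <;> rw [h0, ha0] <;> omega
  | succ i IH =>
    intro h
    obtain ⟨qi, hq1, hq2, hq3, hq4⟩ := IH (by omega)
    have haip : a ⟨i, by omega⟩ < a ⟨i + 1, h⟩ := ha (Fin.mk_lt_mk.mpr (by omega))
    have hST : (Set.range fun j : Fin (i + 1) => a ⟨j, by omega⟩) ⊆
        (Set.range fun j : Fin (i + 1 + 1) => a ⟨j, by omega⟩) := by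
      rintro x ⟨j, rfl⟩
      exact ⟨⟨j, by omega⟩, rfl⟩
    have hmemS : a ⟨i, by omega⟩ ∈ (Set.range fun j : Fin (i + 1) => a ⟨j, by omega⟩) :=
      ⟨⟨i, by omega⟩, rfl⟩
    have hmemT : a ⟨i + 1, h⟩ ∈ (Set.range fun j : Fin (i + 1 + 1) => a ⟨j, by omega⟩) :=
      ⟨⟨i + 1, by omega⟩, rfl⟩
    obtain ⟨q, hh1, hh2, hh3, hh4⟩ := step_lemma hST hmemS hmemT
      (han _) haip hq1 hq4 (irred_not_mem u a ha hirr h)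
    refine ⟨q, hh1, hh2, ?_, hh4⟩
    calc 2 ^ (i + 1) * q = 2 ^ i * (2 * q) := by ring
      _ ≤ 2 ^ i * qi := Nat.mul_le_mul_left _ hh3
      _ ≤ n := hq3

theorem exists_qi {α : Type*} {n k : ℕ} (u : Fin n → α) (a : Fin (k + 1) → ℕ)
    (ha : StrictMono a) (ha0 : a 0 = 0)
    (hirr : IsIrred n (PeriodSet n u) (Set.range a)) :
    ∀ i : Fin (k + 1), ∃ q : ℕ, 1 ≤ q ∧ q ≤ n - a i ∧
      (q : ℝ) ≤ (n : ℝ) / 2 ^ (i : ℕ) ∧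
      (a i + q = n ∨
        a i + q ∈ FC n (Set.range fun j : Fin ((i : ℕ) + 1) => a ⟨j, by omega⟩)) := by
  intro i
  obtain ⟨q, h1, h2, h3, h4⟩ := exists_qi_aux u a ha ha0 hirr i.val i.isLt
  have hi : (⟨i.val, i.isLt⟩ : Fin (k + 1)) = i := rfl
  rw [hi] at h2 h4
  refine ⟨q, h1, h2, ?_, h4⟩
  rw [le_div_iff₀ (by positivity)]
  calc (q : ℝ) * 2 ^ (i : ℕ) = ((2 ^ (i : ℕ) * q : ℕ) : ℝ) := by push_cast; ring
    _ ≤ n := by exact_mod_cast h3
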